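/- Let G₁, G₂ : Polynomial ℂ be nonzero polynomials with natDegree G₁ = D₁, natDegree G₂ = D₂, G₁⋆[D₁] = G₁, G₂⋆[D₂] = G₂, and IsCoprime G₁ G₂. If S₁, S₂ : Polynomial ℂ satisfy natDegree S₁ ≤ D₁, natDegree S₂ ≤ D₂, S₁⋆[D₁] = S₁, S₂⋆[D₂] = S₂, and G₁ * S₂ = G₂ * S₁, then there exists a real number c such that S₁ = (c : ℂ) • G₁ and S₂ = (c : ℂ) • G₂. -/
import Mathlib


/-- The conjugate-reciprocal of `P` with respect to `N`. -/
noncomputable def creflect (N : ℕ) (P : Polynomial ℂ) : Polynomial ℂ :=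
  Polynomial.reflect N (P.map (starRingEnd ℂ))

lemma creflect_C_mul (N : ℕ) (a : ℂ) (P : Polynomial ℂ) :
    creflect N (Polynomial.C a * P) =
      Polynomial.C ((starRingEnd ℂ) a) * creflect N P := by
  simp [creflect, Polynomial.reflect_C_mul]

/-- For coprime self-reciprocal `G₁, G₂`, self-reciprocal solutions of
`G₁ S₂ = G₂ S₁` are real multiples of `G₁, G₂`. -/
theorem coprime_selfReciprocal_cross_eq (G₁ G₂ : Polynomial ℂ) (D₁ D₂ : ℕ)
    (hG₁ : G₁ ≠ 0) (hG₂ : G₂ ≠ 0)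
    (hD₁ : G₁.natDegree = D₁) (hD₂ : G₂.natDegree = D₂)
    (hsr₁ : creflect D₁ G₁ = G₁) (hsr₂ : creflect D₂ G₂ = G₂)
    (hcop : IsCoprime G₁ G₂)
    (S₁ S₂ : Polynomial ℂ)
    (hS₁ : S₁.natDegree ≤ D₁) (hS₂ : S₂.natDegree ≤ D₂)
    (hsrS₁ : creflect D₁ S₁ = S₁) (hsrS₂ : creflect D₂ S₂ = S₂)
    (heq : G₁ * S₂ = G₂ * S₁) :
    ∃ c : ℝ, S₁ = (c : ℂ) • G₁ ∧ S₂ = (c : ℂ) • G₂ := by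
  have hdvd : G₁ ∣ S₁ := hcop.dvd_of_dvd_mul_left ⟨S₂, heq.symm⟩
  obtain ⟨q, hq⟩ := hdvd
  by_cases hq0 : q = 0
  · refine ⟨0, ?_, ?_⟩
    · simp [hq, hq0]
    · have : G₁ * S₂ = G₁ * 0 := by
        rw [heq, hq, hq0]; ring
      have := mul_left_cancel₀ hG₁ this
      simp [this]
  · -- q has natDegree 0, so q = C a
    have hdeg : q.natDegree = 0 := by
      have h1 : S₁.natDegree = G₁.natDegree + q.natDegree := by
        rw [hq]; exact Polynomial.natDegree_mul hG₁ hq0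
      omega
    obtain ⟨a, ha⟩ := Polynomial.natDegree_eq_zero.mp hdeg
    have hS1 : S₁ = Polynomial.C a * G₁ := by rw [hq, ← ha]; ring
    have hS2 : S₂ = Polynomial.C a * G₂ := by
      apply mul_left_cancel₀ hG₁
      rw [heq, hS1]; ring
    -- self-reciprocity forces a real
    have hconj : Polynomial.C ((starRingEnd ℂ) a) * G₁ = Polynomial.C a * G₁ := by
      have := hsrS₁
      rw [hS1, creflect_C_mul, hsr₁] at this
      rw [this]
    have hae : (starRingEnd ℂ) a = a := by
      have := mul_right_cancel₀ hG₁ hconj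
      exact Polynomial.C_injective this
    obtain ⟨r, hr⟩ := Complex.conj_eq_iff_real.mp hae
    refine ⟨r, ?_, ?_⟩
    · rw [hS1, ← hr, Polynomial.smul_eq_C_mul]
    · rw [hS2, ← hr, Polynomial.smul_eq_C_mul]
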